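/- Let f : ℝⁿ → ℝ be convex with f(0) = 0 and suppose f is not identically zero on any ray, i.e., the sublevel set {v : f(v) ≤ 1} is bounded. Then ∫_{ℝⁿ} e^{-f(w)} dw is finite and comparable to |{w : f(w) ≤ 1}| with constants depending only on n. -/

import Mathlib

open MeasureTheory Pointwise

lemma aux_summable (n : ℕ) :
    Summable (fun k : ℕ => ((k : ℝ) + 1) ^ n * Real.exp (-1) ^ k) := by
  have hr : ‖Real.exp (-1)‖ < 1 := by
    rw [Real.norm_eq_abs, abs_of_pos (Real.exp_pos _)]
    exact Real.exp_lt_one_iff.2 (by norm_num)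
  have h := summable_pow_mul_geometric_of_norm_lt_one (R := ℝ) n hr
  have h1 : Summable (fun k : ℕ => ((k + 1 : ℕ) : ℝ) ^ n * Real.exp (-1) ^ (k + 1)) :=
    (summable_nat_add_iff 1).2 h
  have h2 := h1.mul_left (Real.exp (-1))⁻¹
  refine h2.congr fun k => ?_
  have he : Real.exp (-1) ≠ 0 := (Real.exp_pos _).ne'
  push_cast
  field_simp [pow_succ]
  ring

theorem stmt3 (n : ℕ) :
    ∃ c C : ℝ, 0 < c ∧ 0 < C ∧
      ∀ f : (Fin n → ℝ) → ℝ, ConvexOn ℝ Set.univ f → f 0 = 0 → (∀ w, 0 ≤ f w) →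
        Bornology.IsBounded {v : Fin n → ℝ | f v ≤ 1} →
        (∫⁻ w, ENNReal.ofReal (Real.exp (-(f w)))) < ⊤ ∧
        ENNReal.ofReal c * volume {w : Fin n → ℝ | f w ≤ 1}
          ≤ ∫⁻ w, ENNReal.ofReal (Real.exp (-(f w))) ∧
        (∫⁻ w, ENNReal.ofReal (Real.exp (-(f w))))
          ≤ ENNReal.ofReal C * volume {w : Fin n → ℝ | f w ≤ 1} := by
  set C : ℝ := ∑' k : ℕ, ((k : ℝ) + 1) ^ n * Real.exp (-1) ^ k with hC
  have hsum := aux_summable n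
  have hnonneg : ∀ k : ℕ, 0 ≤ ((k : ℝ) + 1) ^ n * Real.exp (-1) ^ k := fun k =>
    mul_nonneg (by positivity) (by positivity)
  have hCpos : 0 < C := by
    have h0 : (0:ℝ) < ((0 : ℝ) + 1) ^ n * Real.exp (-1) ^ 0 := by positivity
    calc (0:ℝ) < ((0 : ℕ) + 1 : ℝ) ^ n * Real.exp (-1) ^ (0:ℕ) := by push_cast; simpa using h0
    _ ≤ C := Summable.le_tsum hsum 0 fun k _ => hnonneg k
  refine ⟨Real.exp (-1), C, Real.exp_pos _, hCpos, ?_⟩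
  intro f hf hf0 hfnn hbdd
  -- basic facts
  have hcont : Continuous f := by
    rw [← continuousOn_univ]
    exact hf.continuousOn isOpen_univ
  have hmeas : Measurable f := hcont.measurable
  set K : Set (Fin n → ℝ) := {v | f v ≤ 1} with hK
  have hKm : MeasurableSet K := hmeas measurableSet_Iic
  have hKfin : volume K < ⊤ := hbdd.measure_lt_top
  -- sublevel set scaling
  have hsub : ∀ s : ℝ, 1 ≤ s → volume {w | f w ≤ s} ≤ ENNReal.ofReal s ^ n * volume K := by
    intro s hs
    have hs0 : 0 < s := lt_of_lt_of_le one_pos hs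
    have hsubset : {w | f w ≤ s} ⊆ s • K := by
      intro v hv
      rw [Set.mem_smul_set_iff_inv_smul_mem₀ hs0.ne']
      have h1 : f (s⁻¹ • v + (1 - s⁻¹) • (0 : Fin n → ℝ)) ≤ s⁻¹ * f v + (1 - s⁻¹) * f 0 :=
        hf.2 (Set.mem_univ v) (Set.mem_univ 0) (by positivity)
          (by simp; exact inv_le_one_of_one_le₀ hs) (by ring)
      have h2 : f (s⁻¹ • v) ≤ s⁻¹ * f v := by
        simpa [hf0] using h1
      have h3 : s⁻¹ * f v ≤ s⁻¹ * s := by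
        apply mul_le_mul_of_nonneg_left hv (by positivity)
      have : f (s⁻¹ • v) ≤ 1 := by
        refine h2.trans (h3.trans_eq ?_)
        field_simp
      exact this
    calc volume {w | f w ≤ s} ≤ volume (s • K) := measure_mono hsubset
      _ = ENNReal.ofReal (s ^ Module.finrank ℝ (Fin n → ℝ)) * volume K :=
          Measure.addHaar_smul_of_nonneg volume hs0.le K
      _ = ENNReal.ofReal s ^ n * volume K := by
          rw [Module.finrank_fin_fun, ENNReal.ofReal_pow hs0.le]
  -- lower bound
  have hlow : ENNReal.ofReal (Real.exp (-1)) * volume K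
      ≤ ∫⁻ w, ENNReal.ofReal (Real.exp (-(f w))) := by
    calc ENNReal.ofReal (Real.exp (-1)) * volume K
        = ∫⁻ _ in K, ENNReal.ofReal (Real.exp (-1)) := by
          rw [setLIntegral_const, mul_comm]
      _ ≤ ∫⁻ w in K, ENNReal.ofReal (Real.exp (-(f w))) := by
          refine setLIntegral_mono (by measurability) fun w hw => ?_
          exact ENNReal.ofReal_le_ofReal (Real.exp_le_exp.2 (neg_le_neg hw))
      _ ≤ ∫⁻ w, ENNReal.ofReal (Real.exp (-(f w))) := setLIntegral_le_lintegral _ _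
  -- decomposition into shells
  set A : ℕ → Set (Fin n → ℝ) := fun k => f ⁻¹' Set.Ico (k : ℝ) (k + 1) with hA
  have hAm : ∀ k, MeasurableSet (A k) := fun k => hmeas measurableSet_Ico
  have hAdisj : Pairwise (Function.onFun Disjoint A) := by
    intro i j hij
    refine Disjoint.preimage f (Set.Ico_disjoint_Ico.2 ?_)
    rcases hij.lt_or_gt with h | h
    · have h' : (i : ℝ) + 1 ≤ (j : ℝ) := by exact_mod_cast h
      exact (min_le_left _ _).trans (h'.trans (le_max_right _ _))
    · have h' : (j : ℝ) + 1 ≤ (i : ℝ) := by exact_mod_cast h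
      exact (min_le_right _ _).trans (h'.trans (le_max_left _ _))
  have hAunion : (⋃ k, A k) = Set.univ := by
    ext w
    simp only [Set.mem_iUnion, Set.mem_univ, iff_true, hA, Set.mem_preimage, Set.mem_Ico]
    exact ⟨⌊f w⌋₊, Nat.floor_le (hfnn w), Nat.lt_floor_add_one _⟩
  -- upper bound
  have hterm : ∀ k : ℕ, (∫⁻ w in A k, ENNReal.ofReal (Real.exp (-(f w))))
      ≤ ENNReal.ofReal (((k : ℝ) + 1) ^ n * Real.exp (-1) ^ k) * volume K := by
    intro k
    have h1 : (∫⁻ w in A k, ENNReal.ofReal (Real.exp (-(f w))))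
        ≤ ∫⁻ _ in A k, ENNReal.ofReal (Real.exp (-(k : ℝ))) := by
      refine setLIntegral_mono (by measurability) fun w hw => ?_
      exact ENNReal.ofReal_le_ofReal (Real.exp_le_exp.2 (neg_le_neg hw.1))
    rw [setLIntegral_const] at h1
    have h2 : volume (A k) ≤ ENNReal.ofReal ((k : ℝ) + 1) ^ n * volume K := by
      refine le_trans (measure_mono ?_) (hsub ((k : ℝ) + 1) (by exact_mod_cast Nat.succ_le_succ (Nat.zero_le k)))
      intro w hw
      exact le_of_lt hw.2
    calc (∫⁻ w in A k, ENNReal.ofReal (Real.exp (-(f w))))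
        ≤ ENNReal.ofReal (Real.exp (-(k : ℝ))) * (ENNReal.ofReal ((k : ℝ) + 1) ^ n * volume K) := by
          refine h1.trans ?_
          exact mul_le_mul_right h2 _
      _ = ENNReal.ofReal (((k : ℝ) + 1) ^ n * Real.exp (-1) ^ k) * volume K := by
          rw [← mul_assoc]
          congr 1
          rw [← ENNReal.ofReal_pow (by positivity), ← ENNReal.ofReal_mul (by positivity)]
          congr 1
          rw [mul_comm]
          congr 1
          rw [← Real.exp_nat_mul]
          congr 1
          ring
  have hup : (∫⁻ w, ENNReal.ofReal (Real.exp (-(f w))))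
      ≤ ENNReal.ofReal C * volume K := by
    have heq : (∫⁻ w, ENNReal.ofReal (Real.exp (-(f w))))
        = ∑' k : ℕ, ∫⁻ w in A k, ENNReal.ofReal (Real.exp (-(f w))) := by
      rw [← lintegral_iUnion hAm hAdisj, hAunion, Measure.restrict_univ]
    rw [heq]
    calc (∑' k : ℕ, ∫⁻ w in A k, ENNReal.ofReal (Real.exp (-(f w))))
        ≤ ∑' k : ℕ, ENNReal.ofReal (((k : ℝ) + 1) ^ n * Real.exp (-1) ^ k) * volume K :=
          ENNReal.tsum_le_tsum hterm
      _ = (∑' k : ℕ, ENNReal.ofReal (((k : ℝ) + 1) ^ n * Real.exp (-1) ^ k)) * volume K :=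
          ENNReal.tsum_mul_right
      _ = ENNReal.ofReal C * volume K := by
          rw [hC, ENNReal.ofReal_tsum_of_nonneg hnonneg hsum]
  refine ⟨?_, hlow, hup⟩
  exact lt_of_le_of_lt hup (ENNReal.mul_lt_top ENNReal.ofReal_lt_top hKfin)
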